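/- Let k > 0, α ∈ ℝ, ρ > 0 and assume the non-resonance condition holds. For j = (j₁,j₂) ∈ ℤ² define K̂_ρ(j) = (4πρ)^{−1/2} · (cos(j₂π)·exp(iβ_{j₁}ρ) − 1)/(k² − α_{j₁}² − (j₂π/ρ)²) whenever k² ≠ α_{j₁}² + (j₂π/ρ)², and K̂_ρ(j) = (i/(4 j₂))·(ρ/π)^{3/2} otherwise (note that in this second case j₂ ≠ 0 by the non-resonance condition, so K̂_ρ(j) is well defined). Then sup_{j∈ℤ²} (1 + j₁² + j₂²)·|K̂_ρ(j)| < ∞. -/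

import Mathlib

open Real

/-- `α_j = j + α`. -/
noncomputable def alphaCoef (α : ℝ) (j : ℤ) : ℝ := (j : ℝ) + α

/-- `β_j = (k² − α_j²)^{1/2}` if `k² ≥ α_j²` and `β_j = i(α_j² − k²)^{1/2}` otherwise,
so that `Im β_j ≥ 0`. -/
noncomputable def betaCoef (k α : ℝ) (j : ℤ) : ℂ :=
  if k ^ 2 ≥ (alphaCoef α j) ^ 2 then
    ((Real.sqrt (k ^ 2 - (alphaCoef α j) ^ 2) : ℝ) : ℂ)
  else Complex.I * ((Real.sqrt ((alphaCoef α j) ^ 2 - k ^ 2) : ℝ) : ℂ)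

/-- The Fourier coefficients `K̂_ρ(j)` of the periodized quasi-periodic Green's function. -/
noncomputable def KhatRho (k α ρ : ℝ) (j : ℤ × ℤ) : ℂ :=
  if k ^ 2 ≠ (alphaCoef α j.1) ^ 2 + ((j.2 : ℝ) * π / ρ) ^ 2 then
    (((1 : ℝ) / Real.sqrt (4 * π * ρ) : ℝ) : ℂ) *
      (((Real.cos ((j.2 : ℝ) * π) : ℝ) : ℂ) *
          Complex.exp (Complex.I * betaCoef k α j.1 * (ρ : ℂ)) - 1) /
      (((k ^ 2 - (alphaCoef α j.1) ^ 2 - ((j.2 : ℝ) * π / ρ) ^ 2 : ℝ)) : ℂ)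
  else
    Complex.I / (4 * (j.2 : ℂ)) * (((ρ / π) ^ ((3 : ℝ) / 2) : ℝ) : ℂ)

lemma betaCoef_im_nonneg (k α : ℝ) (j : ℤ) : 0 ≤ (betaCoef k α j).im := by
  unfold betaCoef
  split_ifs with h
  · simp
  · simp [Real.sqrt_nonneg]

lemma norm_exp_le_one (k α ρ : ℝ) (hρ : 0 ≤ ρ) (j : ℤ) :
    ‖Complex.exp (Complex.I * betaCoef k α j * (ρ : ℂ))‖ ≤ 1 := by
  rw [Complex.norm_exp]
  have him := betaCoef_im_nonneg k α j
  have hre : (Complex.I * betaCoef k α j * (ρ : ℂ)).re = -(betaCoef k α j).im * ρ := by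
    simp [Complex.mul_re, Complex.mul_im]
  rw [hre]
  have : -(betaCoef k α j).im * ρ ≤ 0 := mul_nonpos_of_nonpos_of_nonneg (by linarith) hρ
  exact Real.exp_le_one_iff.mpr this

/-- Decay of order `|j|⁻²` of the Fourier coefficients of the periodized
quasi-periodic Green's function (away from Wood's anomalies). -/
theorem KhatRho_decay (k α ρ : ℝ) (hk : 0 < k) (hρ : 0 < ρ)
    (hnr : ∀ j : ℤ, k ^ 2 ≠ (alphaCoef α j) ^ 2) :
    ∃ C : ℝ, ∀ j : ℤ × ℤ,
      (1 + (j.1 : ℝ) ^ 2 + (j.2 : ℝ) ^ 2) * ‖KhatRho k α ρ j‖ ≤ C := by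
  have hπ := Real.pi_pos
  set c₀ : ℝ := min (1/2) (π^2/ρ^2) with hc₀def
  have hc₀ : 0 < c₀ := lt_min (by norm_num) (by positivity)
  have hc₀half : c₀ ≤ 1/2 := min_le_left _ _
  have hc₀π : c₀ ≤ π^2/ρ^2 := min_le_right _ _
  set M : ℝ := (2*(α^2+k^2)+2)/c₀ with hMdef
  have hM : 0 < M := hMdef ▸ div_pos (by positivity) hc₀
  set N : ℕ := ⌈Real.sqrt M⌉₊ with hNdef
  set F : Finset (ℤ×ℤ) := Finset.Icc (-(N:ℤ)) N ×ˢ Finset.Icc (-(N:ℤ)) N with hFdef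
  have hFne : F.Nonempty := ⟨(0,0), by simp [hFdef]⟩
  clear_value c₀ M
  refine ⟨max (F.sup' hFne (fun j => (1 + (j.1:ℝ)^2 + (j.2:ℝ)^2) * ‖KhatRho k α ρ j‖))
    (2*(1+2/c₀)/Real.sqrt (4*π*ρ)), fun j => ?_⟩
  by_cases hS : (j.1:ℝ)^2 + (j.2:ℝ)^2 ≤ M
  · -- the finite box
    have habs : ∀ m : ℤ, (m:ℝ)^2 ≤ M → m ∈ Finset.Icc (-(N:ℤ)) N := by
      intro m hm
      rw [hNdef]
      have h1 : |(m:ℝ)| ≤ Real.sqrt M := by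
        rw [← Real.sqrt_sq_eq_abs]
        exact Real.sqrt_le_sqrt hm
      have h2 : |(m:ℝ)| ≤ ((⌈Real.sqrt M⌉₊ : ℕ):ℝ) := h1.trans (Nat.le_ceil _)
      have h3 : |m| ≤ ((⌈Real.sqrt M⌉₊ : ℕ):ℤ) := by
        exact_mod_cast (by push_cast; exact h2 : (|m|:ℝ) ≤ ((⌈Real.sqrt M⌉₊ : ℕ):ℝ))
      simpa [Finset.mem_Icc] using abs_le.mp h3
    have hj : j ∈ F := by
      rw [hFdef, Finset.mem_product]
      constructor
      · exact habs j.1 (by nlinarith [sq_nonneg ((j.2:ℝ))])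
      · exact habs j.2 (by nlinarith [sq_nonneg ((j.1:ℝ))])
    exact le_trans (Finset.le_sup'
      (fun j => (1 + (j.1:ℝ)^2 + (j.2:ℝ)^2) * ‖KhatRho k α ρ j‖) hj) (le_max_left _ _)
  · -- the exterior region
    push_neg at hS
    set S : ℝ := (j.1:ℝ)^2 + (j.2:ℝ)^2 with hSdef
    set A : ℝ := alphaCoef α j.1 with hAdef
    set B : ℝ := (j.2:ℝ)*π/ρ with hBdef
    clear_value S A B
    have hA : (j.1:ℝ)^2/2 - α^2 ≤ A^2 := by
      rw [hAdef]; unfold alphaCoef; nlinarith [sq_nonneg ((j.1:ℝ)+2*α)]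
    have hB : c₀ * (j.2:ℝ)^2 ≤ B^2 := by
      have hB2 : B^2 = (j.2:ℝ)^2 * (π^2/ρ^2) := by
        rw [hBdef]; field_simp
      have : c₀ ≤ π^2/ρ^2 := hc₀π
      nlinarith [sq_nonneg ((j.2:ℝ))]
    have hcM : c₀ * M = 2*(α^2+k^2)+2 := by
      rw [hMdef]; field_simp
    have hcS : 2*(α^2+k^2)+2 < c₀ * S := by
      rw [← hcM]; exact (mul_lt_mul_iff_right₀ hc₀).mpr hS
    set D : ℝ := A^2 + B^2 - k^2 with hDdef
    clear_value D
    have hj1 : c₀ * (j.1:ℝ)^2 ≤ (j.1:ℝ)^2/2 := by nlinarith [sq_nonneg ((j.1:ℝ))]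
    have hDlow : c₀ * S - α^2 - k^2 ≤ D := by
      rw [hDdef, hSdef]; linarith
    have hD1 : c₀ * S / 2 ≤ D := by linarith
    have hD2 : 1 ≤ D := by linarith [sq_nonneg α, sq_nonneg k]
    have hDpos : 0 < D := by linarith
    have hlt : k^2 < A^2 + B^2 := by rw [hDdef] at hDpos; linarith
    have hne : k ^ 2 ≠ (alphaCoef α j.1) ^ 2 + ((j.2 : ℝ) * π / ρ) ^ 2 := by
      rw [← hAdef, ← hBdef]; exact ne_of_lt hlt
    have hKval : KhatRho k α ρ j =
        (((1 : ℝ) / Real.sqrt (4 * π * ρ) : ℝ) : ℂ) *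
          (((Real.cos ((j.2 : ℝ) * π) : ℝ) : ℂ) *
              Complex.exp (Complex.I * betaCoef k α j.1 * (ρ : ℂ)) - 1) /
          (((k ^ 2 - (alphaCoef α j.1) ^ 2 - ((j.2 : ℝ) * π / ρ) ^ 2 : ℝ)) : ℂ) := by
      rw [KhatRho, if_pos hne]
    have hnum : ‖(((Real.cos ((j.2 : ℝ) * π) : ℝ) : ℂ) *
        Complex.exp (Complex.I * betaCoef k α j.1 * (ρ : ℂ)) - 1)‖ ≤ 2 := by
      calc ‖_ - 1‖ ≤ ‖(((Real.cos ((j.2 : ℝ) * π) : ℝ) : ℂ) *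
            Complex.exp (Complex.I * betaCoef k α j.1 * (ρ : ℂ)))‖ + ‖(1:ℂ)‖ :=
              norm_sub_le _ _
        _ ≤ 1 + 1 := by
            rw [norm_mul, norm_one]
            gcongr
            have h1 : ‖(((Real.cos ((j.2 : ℝ) * π) : ℝ) : ℂ))‖ ≤ 1 := by
              rw [Complex.norm_real]
              exact abs_le.mpr ⟨Real.neg_one_le_cos _, Real.cos_le_one _⟩
            calc ‖_‖ * ‖_‖ ≤ 1 * 1 :=
              mul_le_mul h1 (norm_exp_le_one k α ρ hρ.le j.1) (norm_nonneg _) one_pos.le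
              _ = 1 := by ring
        _ = 2 := by norm_num
    have hcnorm : ‖(((1 : ℝ) / Real.sqrt (4 * π * ρ) : ℝ) : ℂ)‖ =
        1 / Real.sqrt (4*π*ρ) := by
      rw [Complex.norm_real, Real.norm_eq_abs, abs_of_nonneg (by positivity)]
    have hdnorm : ‖(((k ^ 2 - (alphaCoef α j.1) ^ 2 - ((j.2 : ℝ) * π / ρ) ^ 2 : ℝ)) : ℂ)‖
        = D := by
      rw [Complex.norm_real, Real.norm_eq_abs, ← hAdef, ← hBdef, hDdef,
        abs_of_nonpos (by linarith)]
      ring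
    have hKnorm : ‖KhatRho k α ρ j‖ ≤ (1 / Real.sqrt (4*π*ρ)) * 2 / D := by
      rw [hKval, norm_div, norm_mul, hcnorm, hdnorm]
      have h := mul_le_mul_of_nonneg_left hnum
        (by positivity : (0:ℝ) ≤ 1 / Real.sqrt (4*π*ρ))
      exact (div_le_div_iff_of_pos_right hDpos).mpr h
    have hsum : 1 + S ≤ (1 + 2/c₀) * D := by
      have he : (2:ℝ)/c₀ * c₀ = 2 := div_mul_cancel₀ 2 hc₀.ne'
      have hS2 : S ≤ 2 * D / c₀ := by
        rw [le_div_iff₀ hc₀]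
        linarith
      have hexp : (1 + 2/c₀) * D = D + 2 * D / c₀ := by ring
      rw [hexp]
      linarith
    refine le_trans ?_ (le_max_right _ _)
    have hgoal : (1 + (j.1:ℝ)^2 + (j.2:ℝ)^2) * ‖KhatRho k α ρ j‖ ≤
        ((1 + 2/c₀) * D) * ((1 / Real.sqrt (4*π*ρ)) * 2 / D) := by
      have : 1 + (j.1:ℝ)^2 + (j.2:ℝ)^2 = 1 + S := by rw [hSdef]; ring
      rw [this]
      have h12 : (0:ℝ) ≤ 1 + 2/c₀ := by
        have := div_nonneg (by norm_num : (0:ℝ) ≤ 2) hc₀.le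
        linarith
      exact mul_le_mul hsum hKnorm (norm_nonneg _) (mul_nonneg h12 hDpos.le)
    refine hgoal.trans (le_of_eq ?_)
    calc ((1 + 2/c₀) * D) * ((1 / Real.sqrt (4*π*ρ)) * 2 / D)
        = (1+2/c₀) * (D / D) * (2 / Real.sqrt (4*π*ρ)) := by ring
      _ = 2*(1+2/c₀)/Real.sqrt (4*π*ρ) := by rw [div_self hDpos.ne']; ring
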